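/- Let d, e ≥ 1 and let s = (s_1,…,s_d) and t = (t_1,…,t_e) be sequences of positive integers such that both P_d^{(s)} and P_e^{(t)} satisfy the integer decomposition property. Then the (d+e+1)-dimensional lecture hall polytope P_{d+e+1}^{(s_1,…,s_d,1,t_1,…,t_e)} of the concatenated sequence (s_1,…,s_d,1,t_1,…,t_e) also satisfies the integer decomposition property. -/

import Mathlib

open Pointwise BigOperators

/-- The `s`-lecture hall polytope
`P_d^(s) = {x ∈ ℝ^d : 0 ≤ x_1/s_1 ≤ x_2/s_2 ≤ ⋯ ≤ x_d/s_d ≤ 1}`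
(indices shifted down by one: `x i` is the paper's `x_{i+1}`). -/
def lectureHall (d : ℕ) (s : Fin d → ℕ) : Set (Fin d → ℝ) :=
  {x | (∀ h : 0 < d, 0 ≤ x ⟨0, h⟩ / (s ⟨0, h⟩ : ℝ)) ∧
       (∀ i : Fin d, ∀ hi : (i : ℕ) + 1 < d,
          x i / (s i : ℝ) ≤ x ⟨(i : ℕ) + 1, hi⟩ / (s ⟨(i : ℕ) + 1, hi⟩ : ℝ)) ∧
       (∀ h : 0 < d,
          x ⟨d - 1, Nat.sub_lt h Nat.one_pos⟩ / (s ⟨d - 1, Nat.sub_lt h Nat.one_pos⟩ : ℝ) ≤ 1)}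

/-- The set of lattice points of `ℝ^d`. -/
def latticePoints (d : ℕ) : Set (Fin d → ℝ) := {x | ∀ i, ∃ n : ℤ, x i = (n : ℝ)}

/-- The dual polytope `Q^∨ = {y : ⟨x,y⟩ ≤ 1 for all x ∈ Q}`. -/
def dualPolytope {d : ℕ} (Q : Set (Fin d → ℝ)) : Set (Fin d → ℝ) :=
  {y | ∀ x ∈ Q, ∑ i, x i * y i ≤ 1}

/-- A full-dimensional lattice polytope is reflexive if it is Fano (the only
lattice point of its interior is the origin) and its dual polytope is a lattice
polytope. -/
def IsReflexive {d : ℕ} (Q : Set (Fin d → ℝ)) : Prop :=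
  interior Q ∩ latticePoints d = {0} ∧
  dualPolytope Q = convexHull ℝ (dualPolytope Q ∩ latticePoints d)

/-- Unimodular equivalence: `Q = f_U(P) + w` with `U` an integer matrix of
determinant `±1` and `w` an integer vector. -/
def UnimodularlyEquivalent {d : ℕ} (P Q : Set (Fin d → ℝ)) : Prop :=
  ∃ (U : Matrix (Fin d) (Fin d) ℤ) (w : Fin d → ℤ),
    (U.det = 1 ∨ U.det = -1) ∧
    Q = (fun x => Matrix.vecMul x (U.map (fun a : ℤ => (a : ℝ))) + fun i => (w i : ℝ)) '' P

/-- `P` is Gorenstein of index `c`: `c` is the smallest positive integer such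
that `cP` is unimodularly equivalent to a reflexive polytope. -/
def GorensteinOfIndex {d : ℕ} (P : Set (Fin d → ℝ)) (c : ℕ) : Prop :=
  0 < c ∧
  (∃ Q : Set (Fin d → ℝ), UnimodularlyEquivalent ((c : ℝ) • P) Q ∧ IsReflexive Q) ∧
  ∀ c' : ℕ, 0 < c' →
    (∃ Q : Set (Fin d → ℝ), UnimodularlyEquivalent ((c' : ℝ) • P) Q ∧ IsReflexive Q) →
    c ≤ c'

/-- `P` is translation equivalent to a reflexive polytope. -/
def TranslationReflexive {d : ℕ} (P : Set (Fin d → ℝ)) : Prop :=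
  ∃ w : Fin d → ℤ, IsReflexive ((fun x => x + fun i => (w i : ℝ)) '' P)

/-- With the conventions `e_0 = 0`, `s_0 = 1`, every position `0,…,d-1` of the
`s`-inversion sequence `e` is an ascent (`e i` is the paper's `e_{i+1}`). -/
def allAscents (d : ℕ) (s : Fin d → ℕ) (e : Fin d → ℤ) : Prop :=
  (∀ h : 0 < d, (0 : ℝ) / 1 < (e ⟨0, h⟩ : ℝ) / (s ⟨0, h⟩ : ℝ)) ∧
  ∀ i : Fin d, ∀ hi : (i : ℕ) + 1 < d,
    (e i : ℝ) / (s i : ℝ) < (e ⟨(i : ℕ) + 1, hi⟩ : ℝ) / (s ⟨(i : ℕ) + 1, hi⟩ : ℝ)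

/-- The integer decomposition property. -/
def HasIDP (d : ℕ) (P : Set (Fin d → ℝ)) : Prop :=
  ∀ k : ℕ, 0 < k → ∀ z : Fin d → ℤ,
    (fun i => (z i : ℝ)) ∈ (k : ℝ) • P →
    ∃ x : Fin k → Fin d → ℤ,
      (∀ j, (fun i => (x j i : ℝ)) ∈ P) ∧ ∀ i, (∑ j, x j i) = z i

lemma append_apply_lt {m n : ℕ} {α : Sort*} (p : Fin m → α) (q : Fin n → α)
    (i : ℕ) (h : i < m) (h' : i < m + n) :
    Fin.append p q ⟨i, h'⟩ = p ⟨i, h⟩ := by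
  have e : (⟨i, h'⟩ : Fin (m + n)) = Fin.castAdd n ⟨i, h⟩ := rfl
  rw [e, Fin.append_left]

lemma append_apply_ge {m n : ℕ} {α : Sort*} (p : Fin m → α) (q : Fin n → α)
    (i : ℕ) (h : m ≤ i) (h' : i < m + n) :
    Fin.append p q ⟨i, h'⟩ = q ⟨i - m, by omega⟩ := by
  have e : (⟨i, h'⟩ : Fin (m + n)) = Fin.natAdd m ⟨i - m, by omega⟩ := by
    apply Fin.ext; simp; omega
  rw [e, Fin.append_right]

lemma snoc_apply_lt {m : ℕ} {α : Type*} (p : Fin m → α) (x : α)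
    (i : ℕ) (h : i < m) (h' : i < m + 1) :
    (Fin.snoc p x : Fin (m + 1) → α) ⟨i, h'⟩ = p ⟨i, h⟩ := by
  have e : (⟨i, h'⟩ : Fin (m + 1)) = Fin.castSucc ⟨i, h⟩ := rfl
  rw [e]; exact Fin.snoc_castSucc _ _ _

lemma snoc_apply_last {m : ℕ} {α : Type*} (p : Fin m → α) (x : α) (h' : m < m + 1) :
    (Fin.snoc p x : Fin (m + 1) → α) ⟨m, h'⟩ = x := by
  have e : (⟨m, h'⟩ : Fin (m + 1)) = Fin.last m := rfl
  rw [e]; exact Fin.snoc_last _ _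

lemma append_snoc_lt {d e : ℕ} {α : Type*} (p : Fin d → α) (x : α) (q : Fin e → α)
    (i : ℕ) (h : i < d) (h' : i < d + 1 + e) :
    Fin.append (Fin.snoc p x) q ⟨i, h'⟩ = p ⟨i, h⟩ := by
  rw [append_apply_lt _ _ _ (by omega) h', snoc_apply_lt _ _ _ h]

lemma append_snoc_mid {d e : ℕ} {α : Type*} (p : Fin d → α) (x : α) (q : Fin e → α)
    (h' : d < d + 1 + e) :
    Fin.append (Fin.snoc p x) q ⟨d, h'⟩ = x := by
  rw [append_apply_lt _ _ _ (by omega) h', snoc_apply_last]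

lemma append_snoc_right {d e : ℕ} {α : Type*} (p : Fin d → α) (x : α) (q : Fin e → α)
    (j : ℕ) (h : j < e) (h' : d + 1 + j < d + 1 + e) :
    Fin.append (Fin.snoc p x) q ⟨d + 1 + j, h'⟩ = q ⟨j, h⟩ := by
  rw [append_apply_ge _ _ _ (by omega) h']
  congr 1; apply Fin.ext; simp

lemma chain_trans {n : ℕ} (f : Fin n → ℝ)
    (h : ∀ i : Fin n, ∀ hi : (i : ℕ) + 1 < n, f i ≤ f ⟨(i : ℕ) + 1, hi⟩) :
    ∀ (a b : ℕ) (ha : a < n) (hb : b < n), a ≤ b → f ⟨a, ha⟩ ≤ f ⟨b, hb⟩ := by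
  suffices H : ∀ (p a : ℕ) (ha : a < n) (hb : a + p < n), f ⟨a, ha⟩ ≤ f ⟨a + p, hb⟩ by
    intro a b ha hb hab
    obtain ⟨p, rfl⟩ := Nat.le.dest hab
    exact H p a ha hb
  intro p
  induction p with
  | zero => intro a ha hb; exact le_of_eq rfl
  | succ p ih =>
    intro a ha hb
    have hp : a + p < n := by omega
    exact le_trans (ih a ha hp) (h ⟨a + p, hp⟩ hb)

lemma mem_smul_lectureHall {n : ℕ} (u : Fin n → ℕ) (x : Fin n → ℝ) {k : ℝ} (hk : 0 < k) :
    x ∈ k • lectureHall n u ↔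
      ((∀ h : 0 < n, 0 ≤ x ⟨0, h⟩ / (u ⟨0, h⟩ : ℝ)) ∧
       (∀ i : Fin n, ∀ hi : (i : ℕ) + 1 < n,
          x i / (u i : ℝ) ≤ x ⟨(i : ℕ) + 1, hi⟩ / (u ⟨(i : ℕ) + 1, hi⟩ : ℝ)) ∧
       (∀ h : 0 < n,
          x ⟨n - 1, Nat.sub_lt h Nat.one_pos⟩ / (u ⟨n - 1, Nat.sub_lt h Nat.one_pos⟩ : ℝ) ≤ k)) := by
  rw [Set.mem_smul_set_iff_inv_smul_mem₀ hk.ne']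
  have hk' : 0 < k⁻¹ := inv_pos.mpr hk
  have e1 : ∀ a : ℝ, (0 ≤ k⁻¹ * a ↔ 0 ≤ a) := fun a => by
    constructor
    · intro h; nlinarith [mul_le_mul_of_nonneg_left h hk.le, mul_inv_cancel₀ hk.ne']
    · intro h; exact mul_nonneg hk'.le h
  have e2 : ∀ a b : ℝ, (k⁻¹ * a ≤ k⁻¹ * b ↔ a ≤ b) := fun a b => mul_le_mul_iff_right₀ hk'
  have e3 : ∀ a : ℝ, (k⁻¹ * a ≤ 1 ↔ a ≤ k) := fun a => by
    rw [inv_mul_le_iff₀ hk, mul_one]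
  constructor
  · rintro ⟨h1, h2, h3⟩
    refine ⟨fun h => ?_, fun i hi => ?_, fun h => ?_⟩
    · have := h1 h; simp only [Pi.smul_apply, smul_eq_mul, mul_div_assoc] at this
      exact (e1 _).mp this
    · have := h2 i hi; simp only [Pi.smul_apply, smul_eq_mul, mul_div_assoc] at this
      exact (e2 _ _).mp this
    · have := h3 h; simp only [Pi.smul_apply, smul_eq_mul, mul_div_assoc] at this
      exact (e3 _).mp this
  · rintro ⟨h1, h2, h3⟩
    refine ⟨fun h => ?_, fun i hi => ?_, fun h => ?_⟩
    · simp only [Pi.smul_apply, smul_eq_mul, mul_div_assoc]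
      exact (e1 _).mpr (h1 h)
    · simp only [Pi.smul_apply, smul_eq_mul, mul_div_assoc]
      exact (e2 _ _).mpr (h2 i hi)
    · simp only [Pi.smul_apply, smul_eq_mul, mul_div_assoc]
      exact (e3 _).mpr (h3 h)

lemma mem_lectureHall_iff {n : ℕ} (u : Fin n → ℕ) (x : Fin n → ℝ) :
    x ∈ lectureHall n u ↔
      ((∀ h : 0 < n, 0 ≤ x ⟨0, h⟩ / (u ⟨0, h⟩ : ℝ)) ∧
       (∀ i : Fin n, ∀ hi : (i : ℕ) + 1 < n,
          x i / (u i : ℝ) ≤ x ⟨(i : ℕ) + 1, hi⟩ / (u ⟨(i : ℕ) + 1, hi⟩ : ℝ)) ∧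
       (∀ h : 0 < n,
          x ⟨n - 1, Nat.sub_lt h Nat.one_pos⟩ / (u ⟨n - 1, Nat.sub_lt h Nat.one_pos⟩ : ℝ) ≤ 1)) := by
  have h1 : x ∈ lectureHall n u ↔ x ∈ (1:ℝ) • lectureHall n u := by rw [one_smul]
  rw [h1, mem_smul_lectureHall u x one_pos]

lemma bigS_mem (d e : ℕ) (hd : 0 < d) (he : 0 < e) (s : Fin d → ℕ) (t : Fin e → ℕ)
    (hs : ∀ i, 0 < s i) (ht : ∀ j, 0 < t j) (a : Fin d → ℤ)
    (ha : (fun i => (a i : ℝ)) ∈ lectureHall d s) :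
    (fun i => ((Fin.append (Fin.snoc a 1) (fun j => (t j : ℤ)) i : ℤ) : ℝ))
      ∈ lectureHall (d + 1 + e) (Fin.append (Fin.snoc s 1) t) := by
  rw [mem_lectureHall_iff] at ha ⊢
  obtain ⟨ha0, hac, hal⟩ := ha
  beta_reduce at ha0 hac hal
  refine ⟨fun h => ?_, fun i hi => ?_, fun h => ?_⟩
  · beta_reduce
    rw [append_snoc_lt a 1 _ 0 hd h, append_snoc_lt s 1 t 0 hd h]
    exact ha0 hd
  · obtain ⟨iv, hiv⟩ := i
    have hi' : iv + 1 < d + 1 + e := hi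
    simp only [Fin.val_mk]
    rcases lt_trichotomy (iv + 1) d with hc | hc | hc
    · rw [append_snoc_lt a 1 _ iv (by omega) hiv, append_snoc_lt s 1 t iv (by omega) hiv,
        append_snoc_lt a 1 _ (iv + 1) hc (by omega), append_snoc_lt s 1 t (iv + 1) hc (by omega)]
      exact hac ⟨iv, by omega⟩ hc
    · rw [show (⟨iv + 1, by omega⟩ : Fin (d + 1 + e)) = ⟨d, by omega⟩ from
        Fin.mk_eq_mk.mpr hc]
      rw [append_snoc_lt a 1 _ iv (by omega) hiv, append_snoc_lt s 1 t iv (by omega) hiv,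
        append_snoc_mid a 1 _ (by omega), append_snoc_mid s 1 t (by omega)]
      rw [show (⟨iv, (by omega : iv < d)⟩ : Fin d) = ⟨d - 1, by omega⟩ from
        Fin.mk_eq_mk.mpr (by omega)]
      norm_num
      exact hal hd
    · rcases lt_trichotomy iv d with hc2 | hc2 | hc2
      · omega
      · rw [show (⟨iv, hiv⟩ : Fin (d + 1 + e)) = ⟨d, by omega⟩ from Fin.mk_eq_mk.mpr hc2,
          show (⟨iv + 1, by omega⟩ : Fin (d + 1 + e)) = ⟨d + 1 + 0, by omega⟩ from
            Fin.mk_eq_mk.mpr (by omega)]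
        rw [append_snoc_mid a 1 _ (by omega), append_snoc_mid s 1 t (by omega),
          append_snoc_right a 1 _ 0 he (by omega), append_snoc_right s 1 t 0 he (by omega)]
        have h0 : (t ⟨0, he⟩ : ℝ) ≠ 0 := by
          have := ht ⟨0, he⟩; positivity
        simp [div_self h0]
      · obtain ⟨j, rfl⟩ : ∃ j, iv = d + 1 + j := ⟨iv - (d + 1), by omega⟩
        have hj : j < e := by omega
        have hj1 : j + 1 < e := by omega
        rw [show (⟨d + 1 + j + 1, by omega⟩ : Fin (d + 1 + e)) = ⟨d + 1 + (j + 1), by omega⟩ from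
            Fin.mk_eq_mk.mpr (by omega)]
        rw [append_snoc_right a 1 _ _ hj hiv, append_snoc_right s 1 t _ hj hiv,
          append_snoc_right a 1 _ _ hj1 (by omega), append_snoc_right s 1 t _ hj1 (by omega)]
        have h1 : ((t ⟨j, hj⟩ : ℕ) : ℝ) ≠ 0 := by have := ht ⟨j, hj⟩; positivity
        have h2 : ((t ⟨j + 1, hj1⟩ : ℕ) : ℝ) ≠ 0 := by have := ht ⟨j + 1, hj1⟩; positivity
        push_cast
        rw [div_self h1, div_self h2]
  · beta_reduce
    rw [show (⟨d + 1 + e - 1, Nat.sub_lt h Nat.one_pos⟩ : Fin (d + 1 + e)) =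
        ⟨d + 1 + (e - 1), by omega⟩ from Fin.mk_eq_mk.mpr (by omega)]
    rw [append_snoc_right a 1 _ _ (by omega) (by omega),
      append_snoc_right s 1 t _ (by omega) (by omega)]
    have h1 : (t ⟨e - 1, by omega⟩ : ℝ) ≠ 0 := by have := ht ⟨e - 1, by omega⟩; positivity
    simp [div_self h1]

lemma bigT_mem (d e : ℕ) (hd : 0 < d) (he : 0 < e) (s : Fin d → ℕ) (t : Fin e → ℕ)
    (hs : ∀ i, 0 < s i) (ht : ∀ j, 0 < t j) (b : Fin e → ℤ)
    (hb : (fun i => (b i : ℝ)) ∈ lectureHall e t) :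
    (fun i => ((Fin.append (fun _ : Fin (d + 1) => (0 : ℤ)) b i : ℤ) : ℝ))
      ∈ lectureHall (d + 1 + e) (Fin.append (Fin.snoc s 1) t) := by
  rw [mem_lectureHall_iff] at hb ⊢
  obtain ⟨hb0, hbc, hbl⟩ := hb
  beta_reduce at hb0 hbc hbl
  refine ⟨fun h => ?_, fun i hi => ?_, fun h => ?_⟩
  · beta_reduce
    rw [append_apply_lt (fun _ : Fin (d + 1) => (0 : ℤ)) b 0 (by omega) h]
    simp
  · obtain ⟨iv, hiv⟩ := i
    have hi' : iv + 1 < d + 1 + e := hi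
    simp only [Fin.val_mk]
    rcases lt_trichotomy iv d with hc | hc | hc
    · rw [append_apply_lt (fun _ : Fin (d + 1) => (0 : ℤ)) b iv (by omega) hiv,
        append_apply_lt (fun _ : Fin (d + 1) => (0 : ℤ)) b (iv + 1) (by omega) (by omega)]
      simp
    · rw [show (⟨iv, hiv⟩ : Fin (d + 1 + e)) = ⟨d, by omega⟩ from Fin.mk_eq_mk.mpr hc,
        show (⟨iv + 1, by omega⟩ : Fin (d + 1 + e)) = ⟨d + 1 + 0, by omega⟩ from
          Fin.mk_eq_mk.mpr (by omega)]
      rw [append_apply_lt (fun _ : Fin (d + 1) => (0 : ℤ)) b d (by omega) (by omega),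
        append_apply_ge (fun _ : Fin (d + 1) => (0 : ℤ)) b (d + 1 + 0) (by omega) (by omega),
        append_snoc_right s 1 t 0 he (by omega)]
      simp only [Int.cast_zero, zero_div]
      rw [show (⟨d + 1 + 0 - (d + 1), (by omega : d + 1 + 0 - (d + 1) < e)⟩ : Fin e) = ⟨0, he⟩ from
        Fin.mk_eq_mk.mpr (by omega)]
      exact hb0 he
    · obtain ⟨j, rfl⟩ : ∃ j, iv = d + 1 + j := ⟨iv - (d + 1), by omega⟩
      have hj : j < e := by omega
      have hj1 : j + 1 < e := by omega
      rw [show (⟨d + 1 + j + 1, by omega⟩ : Fin (d + 1 + e)) = ⟨d + 1 + (j + 1), by omega⟩ from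
          Fin.mk_eq_mk.mpr (by omega)]
      rw [append_apply_ge (fun _ : Fin (d + 1) => (0 : ℤ)) b (d + 1 + j) (by omega) hiv,
        append_apply_ge (fun _ : Fin (d + 1) => (0 : ℤ)) b (d + 1 + (j + 1)) (by omega) (by omega),
        append_snoc_right s 1 t _ hj hiv, append_snoc_right s 1 t _ hj1 (by omega)]
      have hthis := hbc ⟨j, hj⟩ (by simp only [Fin.val_mk]; exact hj1)
      rw [show (⟨d + 1 + j - (d + 1), (by omega : d + 1 + j - (d + 1) < e)⟩ : Fin e) = ⟨j, hj⟩ from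
          Fin.mk_eq_mk.mpr (by omega),
        show (⟨d + 1 + (j + 1) - (d + 1), (by omega : d + 1 + (j + 1) - (d + 1) < e)⟩ : Fin e) =
          ⟨j + 1, hj1⟩ from Fin.mk_eq_mk.mpr (by omega)]
      exact hthis
  · beta_reduce
    rw [show (⟨d + 1 + e - 1, Nat.sub_lt h Nat.one_pos⟩ : Fin (d + 1 + e)) =
        ⟨d + 1 + (e - 1), by omega⟩ from Fin.mk_eq_mk.mpr (by omega)]
    rw [append_apply_ge (fun _ : Fin (d + 1) => (0 : ℤ)) b (d + 1 + (e - 1)) (by omega) (by omega),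
      append_snoc_right s 1 t (e - 1) (by omega) (by omega)]
    rw [show (⟨d + 1 + (e - 1) - (d + 1), (by omega : d + 1 + (e - 1) - (d + 1) < e)⟩ : Fin e) =
        ⟨e - 1, by omega⟩ from Fin.mk_eq_mk.mpr (by omega)]
    exact hbl he

/-- if `P_d^(s)` and `P_e^(t)` satisfy the integer decomposition
property, then so does the lecture hall polytope of the concatenated sequence
`(s_1, …, s_d, 1, t_1, …, t_e)`. -/
theorem stmt_18 (d e : ℕ) (hd : 0 < d) (he : 0 < e)
    (s : Fin d → ℕ) (t : Fin e → ℕ) (hs : ∀ i, 0 < s i) (ht : ∀ j, 0 < t j)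
    (hidps : HasIDP d (lectureHall d s))
    (hidpt : HasIDP e (lectureHall e t)) :
    HasIDP (d + 1 + e) (lectureHall (d + 1 + e) (Fin.append (Fin.snoc s 1) t)) := by
  intro k hk z hz
  have hk' : (0 : ℝ) < (k : ℕ) := by exact_mod_cast hk
  rw [mem_smul_lectureHall (Fin.append (Fin.snoc s 1) t) (fun i => (z i : ℝ)) hk'] at hz
  obtain ⟨H0, Hc, Hl⟩ := hz
  beta_reduce at H0 Hc Hl
  have hus : ∀ (i : ℕ) (h : i < d) (h' : i < d + 1 + e),
      Fin.append (Fin.snoc s 1) t ⟨i, h'⟩ = s ⟨i, h⟩ := fun i h h' => append_snoc_lt s 1 t i h h'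
  have hud : ∀ h' : d < d + 1 + e, Fin.append (Fin.snoc s 1) t ⟨d, h'⟩ = 1 :=
    fun h' => append_snoc_mid s 1 t h'
  have hut : ∀ (j : ℕ) (h : j < e) (h' : d + 1 + j < d + 1 + e),
      Fin.append (Fin.snoc s 1) t ⟨d + 1 + j, h'⟩ = t ⟨j, h⟩ :=
    fun j h h' => append_snoc_right s 1 t j h h'
  have hA : ∀ (a b : ℕ) (ha : a < d + 1 + e) (hb : b < d + 1 + e), a ≤ b →
      (z ⟨a, ha⟩ : ℝ) / (Fin.append (Fin.snoc s 1) t ⟨a, ha⟩ : ℕ) ≤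
      (z ⟨b, hb⟩ : ℝ) / (Fin.append (Fin.snoc s 1) t ⟨b, hb⟩ : ℕ) :=
    chain_trans (fun i => (z i : ℝ) / (Fin.append (Fin.snoc s 1) t i : ℕ)) Hc
  have hFnn : ∀ (a : ℕ) (ha : a < d + 1 + e),
      0 ≤ (z ⟨a, ha⟩ : ℝ) / (Fin.append (Fin.snoc s 1) t ⟨a, ha⟩ : ℕ) := by
    intro a ha
    exact le_trans (H0 (by omega)) (hA 0 a (by omega) ha (by omega))
  have hFk : ∀ (a : ℕ) (ha : a < d + 1 + e),
      (z ⟨a, ha⟩ : ℝ) / (Fin.append (Fin.snoc s 1) t ⟨a, ha⟩ : ℕ) ≤ (k : ℕ) := by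
    intro a ha
    exact le_trans (hA a (d + 1 + e - 1) ha (by omega) (by omega)) (Hl (by omega))
  have hdn : d < d + 1 + e := by omega
  set m : ℤ := z ⟨d, hdn⟩ with hmdef
  have hFd : (z ⟨d, hdn⟩ : ℝ) / (Fin.append (Fin.snoc s 1) t ⟨d, hdn⟩ : ℕ) = (m : ℝ) := by
    rw [hud hdn, hmdef]; simp
  have hm0 : 0 ≤ m := by
    have h1 := hFnn d hdn; rw [hFd] at h1; exact_mod_cast h1
  have hmk : m ≤ (k : ℤ) := by
    have h1 := hFk d hdn; rw [hFd] at h1; exact_mod_cast h1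
  have hm' : ((m.toNat : ℤ)) = m := Int.toNat_of_nonneg hm0
  have hmtR : ((m.toNat : ℕ) : ℝ) = (m : ℝ) := by exact_mod_cast hm'
  have hm'k : m.toNat ≤ k := by omega
  obtain ⟨r, hr⟩ := Nat.le.dest hm'k
  subst hr
  have htne : ∀ jj : Fin e, ((t jj : ℕ) : ℝ) ≠ 0 := fun jj => by
    have := ht jj; positivity
  have hsub : ∀ (azr c : ℝ), c ≠ 0 → (azr - (m : ℝ) * c) / c = azr / c - m := fun azr c hc => by
    field_simp
  -- decomposition of the s-part
  have hxs : ∃ xs : Fin m.toNat → Fin d → ℤ,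
      (∀ j, (fun i => (xs j i : ℝ)) ∈ lectureHall d s) ∧
      ∀ i : Fin d, (∑ j, xs j i) = z ⟨i.1, by omega⟩ := by
    rcases Nat.eq_zero_or_pos m.toNat with h0 | hpos
    · refine ⟨fun _ _ => 0, fun j => absurd j.2 (by omega), fun i => ?_⟩
      obtain ⟨iv, hiv⟩ := i
      have hnn := hFnn iv (by omega)
      have hle := hA iv d (by omega) hdn (by omega)
      rw [hFd] at hle
      have hmz0 : m = 0 := by omega
      rw [hmz0] at hle
      push_cast at hle
      have heq := le_antisymm hle hnn
      have hz0 : (z ⟨iv, (by omega : iv < d + 1 + e)⟩ : ℝ) = 0 := by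
        rcases div_eq_zero_iff.mp heq with hh | hh
        · exact hh
        · exfalso
          rw [hus iv hiv (by omega)] at hh
          have hp : (0 : ℝ) < ((s ⟨iv, hiv⟩ : ℕ) : ℝ) := by exact_mod_cast hs ⟨iv, hiv⟩
          rw [hh] at hp
          exact absurd hp (lt_irrefl 0)
      have hz0' : z ⟨iv, (by omega : iv < d + 1 + e)⟩ = 0 := by exact_mod_cast hz0
      simp only [Fin.val_mk]
      simp [hz0']
    · refine hidps m.toNat hpos (fun i => z ⟨i.1, by omega⟩) ?_
      rw [mem_smul_lectureHall s _ (by exact_mod_cast hpos : (0:ℝ) < (m.toNat : ℕ))]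
      refine ⟨fun h => ?_, fun i hi => ?_, fun h => ?_⟩
      · beta_reduce
        rw [← hus 0 h (by omega)]
        exact hFnn 0 (by omega)
      · obtain ⟨iv, hiv⟩ := i
        have hi2 : iv + 1 < d := hi
        beta_reduce
        simp only [Fin.val_mk]
        rw [← hus iv hiv (by omega), ← hus (iv + 1) hi2 (by omega)]
        exact hA iv (iv + 1) (by omega) (by omega) (by omega)
      · beta_reduce
        rw [← hus (d - 1) (by omega) (by omega), hmtR]
        have h1 := hA (d - 1) d (by omega) hdn (by omega)
        rw [hFd] at h1
        exact h1
  -- decomposition of the t-part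
  have hxt : ∃ xt : Fin r → Fin e → ℤ,
      (∀ l, (fun i => (xt l i : ℝ)) ∈ lectureHall e t) ∧
      ∀ jj : Fin e, (∑ l, xt l jj) = z ⟨d + 1 + jj.1, by omega⟩ - m * t jj := by
    rcases Nat.eq_zero_or_pos r with h0 | hpos
    · refine ⟨fun _ _ => 0, fun l => absurd l.2 (by omega), fun jj => ?_⟩
      obtain ⟨jv, hjv⟩ := jj
      have hlo := hA d (d + 1 + jv) hdn (by omega) (by omega)
      rw [hFd, hut jv hjv (by omega)] at hlo
      have hhi := hFk (d + 1 + jv) (by omega)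
      rw [hut jv hjv (by omega)] at hhi
      have hkR : ((m.toNat + r : ℕ) : ℝ) = (m : ℝ) := by
        subst h0; push_cast [hmtR]; ring
      rw [hkR] at hhi
      have heq : (z ⟨d + 1 + jv, (by omega : d + 1 + jv < d + 1 + e)⟩ : ℝ) =
          (m : ℝ) * (t ⟨jv, hjv⟩ : ℕ) := by
        have hdiv := le_antisymm hhi hlo
        rw [div_eq_iff (htne ⟨jv, hjv⟩)] at hdiv
        exact hdiv
      have heqz : z ⟨d + 1 + jv, (by omega : d + 1 + jv < d + 1 + e)⟩ = m * (t ⟨jv, hjv⟩ : ℤ) := by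
        exact_mod_cast heq
      simp only [Fin.val_mk]
      simp [heqz]
    · refine hidpt r hpos (fun jj => z ⟨d + 1 + jj.1, by omega⟩ - m * t jj) ?_
      rw [mem_smul_lectureHall t _ (by exact_mod_cast hpos : (0:ℝ) < (r : ℕ))]
      refine ⟨fun h => ?_, fun jj hj => ?_, fun h => ?_⟩
      · beta_reduce
        simp only [Fin.val_mk]
        have h1 := hA d (d + 1 + 0) hdn (by omega) (by omega)
        rw [hFd, hut 0 h (by omega)] at h1
        push_cast
        rw [hsub _ _ (htne ⟨0, h⟩)]
        exact sub_nonneg.mpr h1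
      · obtain ⟨jv, hjv⟩ := jj
        have hj2 : jv + 1 < e := hj
        beta_reduce
        simp only [Fin.val_mk]
        have h1 := hA (d + 1 + jv) (d + 1 + (jv + 1)) (by omega) (by omega) (by omega)
        rw [hut jv hjv (by omega), hut (jv + 1) hj2 (by omega)] at h1
        push_cast
        rw [hsub _ _ (htne ⟨jv, hjv⟩), hsub _ _ (htne ⟨jv + 1, hj2⟩)]
        exact sub_le_sub_right h1 _
      · beta_reduce
        simp only [Fin.val_mk]
        have h1 := hFk (d + 1 + (e - 1)) (by omega)
        rw [hut (e - 1) (by omega) (by omega)] at h1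
        have hkR : ((m.toNat + r : ℕ) : ℝ) = (m : ℝ) + r := by push_cast [hmtR]; ring
        rw [hkR] at h1
        push_cast
        rw [hsub _ _ (htne ⟨e - 1, by omega⟩)]
        have h2 : (z ⟨d + 1 + (e - 1), (by omega : d + 1 + (e - 1) < d + 1 + e)⟩ : ℝ) /
            (t ⟨e - 1, (by omega : e - 1 < e)⟩ : ℕ) - (m : ℝ) ≤ r := by linarith
        exact h2
  obtain ⟨xs, hxsmem, hxssum⟩ := hxs
  obtain ⟨xt, hxtmem, hxtsum⟩ := hxt
  refine ⟨Fin.append (fun j => Fin.append (Fin.snoc (xs j) 1) (fun jj => (t jj : ℤ)))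
      (fun l => Fin.append (fun _ : Fin (d + 1) => (0 : ℤ)) (xt l)), ?_, ?_⟩
  · intro j
    obtain ⟨jv, hjv⟩ := j
    by_cases hcase : jv < m.toNat
    · rw [append_apply_lt _ _ jv hcase hjv]
      exact bigS_mem d e hd he s t hs ht (xs ⟨jv, hcase⟩) (hxsmem ⟨jv, hcase⟩)
    · rw [append_apply_ge _ _ jv (by omega) hjv]
      exact bigT_mem d e hd he s t hs ht (xt ⟨jv - m.toNat, by omega⟩)
        (hxtmem ⟨jv - m.toNat, by omega⟩)
  · intro i
    obtain ⟨iv, hiv⟩ := i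
    rw [Fin.sum_univ_add]
    simp only [Fin.append_left, Fin.append_right]
    rcases lt_trichotomy iv d with hc | hc | hc
    · have e1 : ∀ j : Fin m.toNat,
          Fin.append (Fin.snoc (xs j) 1) (fun jj => (t jj : ℤ)) ⟨iv, hiv⟩ = xs j ⟨iv, hc⟩ :=
        fun j => append_snoc_lt _ _ _ iv hc hiv
      have e2 : ∀ l : Fin r,
          Fin.append (fun _ : Fin (d + 1) => (0 : ℤ)) (xt l) ⟨iv, hiv⟩ = 0 :=
        fun l => append_apply_lt _ _ iv (by omega) hiv
      simp only [e1, e2, Finset.sum_const_zero, add_zero]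
      exact hxssum ⟨iv, hc⟩
    · rw [show (⟨iv, hiv⟩ : Fin (d + 1 + e)) = ⟨d, hdn⟩ from Fin.mk_eq_mk.mpr hc]
      have e1 : ∀ j : Fin m.toNat,
          Fin.append (Fin.snoc (xs j) 1) (fun jj => (t jj : ℤ)) ⟨d, hdn⟩ = 1 :=
        fun j => append_snoc_mid _ _ _ hdn
      have e2 : ∀ l : Fin r,
          Fin.append (fun _ : Fin (d + 1) => (0 : ℤ)) (xt l) ⟨d, hdn⟩ = 0 :=
        fun l => append_apply_lt _ _ d (by omega) hdn
      simp only [e1, e2, Finset.sum_const_zero, add_zero, Finset.sum_const, Finset.card_univ,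
        Fintype.card_fin, nsmul_eq_mul, mul_one]
      rw [hm']
    · obtain ⟨jv, rfl⟩ : ∃ jv, iv = d + 1 + jv := ⟨iv - (d + 1), by omega⟩
      have hjv : jv < e := by omega
      have e1 : ∀ j : Fin m.toNat,
          Fin.append (Fin.snoc (xs j) 1) (fun jj => (t jj : ℤ)) ⟨d + 1 + jv, hiv⟩ =
            (t ⟨jv, hjv⟩ : ℤ) :=
        fun j => append_snoc_right _ _ _ jv hjv hiv
      have e2 : ∀ l : Fin r,
          Fin.append (fun _ : Fin (d + 1) => (0 : ℤ)) (xt l) ⟨d + 1 + jv, hiv⟩ =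
            xt l ⟨jv, hjv⟩ := by
        intro l
        rw [append_apply_ge _ _ (d + 1 + jv) (by omega) hiv]
        congr 1
        exact Fin.mk_eq_mk.mpr (by omega)
      simp only [e1, e2, Finset.sum_const, Finset.card_univ, Fintype.card_fin, nsmul_eq_mul]
      rw [show (∑ l, xt l ⟨jv, hjv⟩) =
          z ⟨d + 1 + jv, hiv⟩ - m * (t ⟨jv, hjv⟩ : ℤ) from hxtsum ⟨jv, hjv⟩]
      rw [hm']
      ring
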